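/- For every integer k ≥ 2 and all n, m ≥ 0, the Bell numbers of order k satisfy b_k(n)·b_k(m) ≤ b_k(n+m) ≤ C(n+m, n)·b_k(n)·b_k(m), where C(n+m, n) is the binomial coefficient. -/

import Mathlib

open scoped Nat

/-- The `k`-times iterated exponential function: `expIter 0 = id`,
`expIter (k+1) x = exp (expIter k x)`. -/
noncomputable def expIter : ℕ → ℝ → ℝ
  | 0 => id
  | k + 1 => fun x => Real.exp (expIter k x)

/-- `BellB k n` is the `n`-th derivative of the `k`-times iterated exponential at `0`,
so that `expIter k x = ∑ n, BellB k n * x ^ n / n !`. -/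
noncomputable def BellB (k n : ℕ) : ℝ := iteratedDeriv n (expIter k) 0

/-- The Bell numbers of order `k`: `bellOrd k n = BellB k n / expIter k 0`. -/
noncomputable def bellOrd (k n : ℕ) : ℝ := BellB k n / expIter k 0

open Finset
open scoped ContDiff

lemma expIter_contDiff (k : ℕ) : ContDiff ℝ ∞ (expIter k) := by
  induction k with
  | zero => exact contDiff_id
  | succ k ih => exact ih.exp

lemma expIter_succ_pos (k : ℕ) (x : ℝ) : 0 < expIter (k + 1) x := Real.exp_pos _

lemma deriv_expIter (k : ℕ) :
    deriv (expIter (k + 1)) = fun x => deriv (expIter k) x * expIter (k + 1) x := by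
  funext x
  show deriv (fun x => Real.exp (expIter k x)) x = _
  rw [deriv_exp ((expIter_contDiff k).differentiable (by simp) x), mul_comm]
  rfl

lemma contDiff_deriv {f : ℝ → ℝ} (hf : ContDiff ℝ ∞ f) : ContDiff ℝ ∞ (deriv f) :=
  (contDiff_infty_iff_deriv.mp hf).2

lemma leibniz_step (u v : ℕ → ℝ) (n : ℕ) :
    (∑ i ∈ range (n + 1), (n.choose i : ℝ) * u (i + 1) * v (n - i))
      + (∑ i ∈ range (n + 1), (n.choose i : ℝ) * u i * v (n + 1 - i))
    = ∑ i ∈ range (n + 2), ((n + 1).choose i : ℝ) * u i * v (n + 1 - i) := by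
  rw [Finset.sum_range_succ' (fun i => ((n + 1).choose i : ℝ) * u i * v (n + 1 - i)) (n + 1)]
  rw [Finset.sum_range_succ' (fun i => ((n).choose i : ℝ) * u i * v (n + 1 - i)) n]
  have h1 : ∀ i ∈ range (n + 1), ((n + 1).choose (i + 1) : ℝ) * u (i + 1) * v (n + 1 - (i + 1))
      = (n.choose i : ℝ) * u (i + 1) * v (n - i) + (n.choose (i + 1) : ℝ) * u (i + 1) * v (n - i) := by
    intro i _
    rw [Nat.succ_sub_succ, Nat.choose_succ_succ]
    push_cast
    ring
  rw [Finset.sum_congr rfl h1, Finset.sum_add_distrib]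
  have h2 : ∑ i ∈ range (n + 1), (n.choose (i + 1) : ℝ) * u (i + 1) * v (n - i)
      = ∑ i ∈ range n, (n.choose (i + 1) : ℝ) * u (i + 1) * v (n - i) := by
    rw [Finset.sum_range_succ, Nat.choose_succ_self]
    simp
  have h3 : ∀ i ∈ range n, (n.choose (i + 1) : ℝ) * u (i + 1) * v (n + 1 - (i + 1))
      = (n.choose (i + 1) : ℝ) * u (i + 1) * v (n - i) := by
    intro i _; rw [Nat.succ_sub_succ]
  rw [Finset.sum_congr rfl h3, ← h2]
  simp only [Nat.choose_zero_right, Nat.cast_one]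
  ring

/-- Leibniz rule for iterated derivatives. -/
lemma iteratedDeriv_mul_aux :
    ∀ (n : ℕ) (f g : ℝ → ℝ), ContDiff ℝ ∞ f → ContDiff ℝ ∞ g → ∀ x : ℝ,
      iteratedDeriv n (fun y => f y * g y) x =
        ∑ i ∈ range (n + 1),
          (n.choose i : ℝ) * iteratedDeriv i f x * iteratedDeriv (n - i) g x := by
  intro n
  induction n with
  | zero => intro f g hf hg x; simp
  | succ n ih =>
    intro f g hf hg x
    have hf' : ContDiff ℝ ∞ (deriv f) := contDiff_deriv hf
    have hg' : ContDiff ℝ ∞ (deriv g) := contDiff_deriv hg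
    have hder : deriv (fun y => f y * g y)
        = fun y => deriv f y * g y + f y * deriv g y := by
      funext y
      exact deriv_mul (hf.differentiable (by simp) y) (hg.differentiable (by simp) y)
    rw [iteratedDeriv_succ', hder]
    have hadd : iteratedDeriv n (fun y => deriv f y * g y + f y * deriv g y) x
        = iteratedDeriv n (fun y => deriv f y * g y) x
          + iteratedDeriv n (fun y => f y * deriv g y) x := by
      have h1 : ContDiff ℝ (n : ℕ∞) (fun y => deriv f y * g y) :=
        ((hf'.mul hg).of_le (by exact_mod_cast le_top))
      have h2 : ContDiff ℝ (n : ℕ∞) (fun y => f y * deriv g y) :=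
        ((hf.mul hg').of_le (by exact_mod_cast le_top))
      simpa [← iteratedDerivWithin_univ, Pi.add_def] using
        iteratedDerivWithin_add (Set.mem_univ x) uniqueDiffOn_univ
          (h1.contDiffWithinAt) (h2.contDiffWithinAt)
    rw [hadd, ih _ _ hf' hg x, ih _ _ hf hg' x]
    have e1 : ∀ i ∈ range (n + 1),
        (n.choose i : ℝ) * iteratedDeriv i (deriv f) x * iteratedDeriv (n - i) g x
          = (n.choose i : ℝ) * iteratedDeriv (i + 1) f x * iteratedDeriv (n - i) g x := by
      intro i _
      rw [← iteratedDeriv_succ']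
    have e2 : ∀ i ∈ range (n + 1),
        (n.choose i : ℝ) * iteratedDeriv i f x * iteratedDeriv (n - i) (deriv g) x
          = (n.choose i : ℝ) * iteratedDeriv i f x * iteratedDeriv (n + 1 - i) g x := by
      intro i hi
      simp only [Finset.mem_range] at hi
      rw [← iteratedDeriv_succ']
      have hni : n - i + 1 = n + 1 - i := by omega
      rw [hni]
    rw [Finset.sum_congr rfl e1, Finset.sum_congr rfl e2]
    exact leibniz_step (fun i => iteratedDeriv i f x) (fun i => iteratedDeriv i g x) n
/-- The fundamental recurrence. -/
lemma BellB_succ (k n : ℕ) :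
    BellB (k + 1) (n + 1)
      = ∑ i ∈ range (n + 1), (n.choose i : ℝ) * BellB k (i + 1) * BellB (k + 1) (n - i) := by
  show iteratedDeriv (n + 1) (expIter (k + 1)) 0 = _
  rw [iteratedDeriv_succ', deriv_expIter k,
    iteratedDeriv_mul_aux n _ _ (contDiff_deriv (expIter_contDiff k)) (expIter_contDiff (k + 1)) 0]
  refine Finset.sum_congr rfl fun i _ => ?_
  rw [← iteratedDeriv_succ']
  rfl

lemma BellB_zero' (k : ℕ) : BellB k 0 = expIter k 0 := by
  simp [BellB, iteratedDeriv_zero]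

lemma BellB_one_eq (n : ℕ) : BellB 1 n = 1 := by
  have h : expIter 1 = Real.exp := by funext x; rfl
  unfold BellB
  rw [h]
  induction n with
  | zero => simp
  | succ n ih => rw [iteratedDeriv_succ', Real.deriv_exp, ih]

lemma BellB_pos (k : ℕ) : ∀ n, 0 < BellB (k + 1) n := by
  induction k with
  | zero => intro n; rw [BellB_one_eq]; norm_num
  | succ k ihk =>
    intro n
    induction n using Nat.strong_induction_on with
    | _ n ihn =>
      match n with
      | 0 => rw [BellB_zero']; exact expIter_succ_pos _ 0
      | n + 1 =>
        rw [BellB_succ]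
        apply Finset.sum_pos
        · intro i hi
          simp only [Finset.mem_range] at hi
          have h1 : (0:ℝ) < n.choose i := by
            exact_mod_cast Nat.choose_pos (by omega)
          exact mul_pos (mul_pos h1 (ihk _)) (ihn (n - i) (by omega))
        · exact ⟨0, Finset.mem_range.mpr (by omega)⟩
lemma exp_one_mul_le_exp (x : ℝ) : Real.exp 1 * x ≤ Real.exp x := by
  have h1 : x ≤ Real.exp (x - 1) := by
    have := Real.add_one_le_exp (x - 1)
    linarith
  calc Real.exp 1 * x ≤ Real.exp 1 * Real.exp (x - 1) :=
        mul_le_mul_of_nonneg_left h1 (Real.exp_pos 1).le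
    _ = Real.exp x := by rw [← Real.exp_add]; ring_nf

lemma two_le_exp_one : (2 : ℝ) ≤ Real.exp 1 := by
  have := Real.exp_one_gt_d9
  linarith

lemma E_succ_ge (k : ℕ) : Real.exp 1 * BellB (k + 1) 0 ≤ BellB (k + 2) 0 := by
  rw [BellB_zero', BellB_zero']
  exact exp_one_mul_le_exp _

/-- The base-level inequality `(m+1) * E₂ ≤ 2 * B₂(m)` (i.e. `2 Bell(m) ≥ m+1`). -/
lemma bellL_base : ∀ m : ℕ, ((m : ℝ) + 1) * BellB 2 0 * BellB 1 m ≤ 2 * BellB 1 0 * BellB 2 m := by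
  intro m
  induction m using Nat.strong_induction_on with
  | _ m ihm =>
    match m with
    | 0 =>
      simp only [BellB_one_eq, Nat.cast_zero]
      nlinarith [BellB_pos 1 0]
    | 1 =>
      have h : BellB 2 1 = BellB 1 1 * BellB 2 0 := by
        have h2 : BellB 2 (0 + 1)
            = ∑ i ∈ range 1, ((0:ℕ).choose i : ℝ) * BellB 1 (i + 1) * BellB 2 (0 - i) :=
          BellB_succ 1 0
        simpa using h2
      simp only [BellB_one_eq, one_mul, mul_one] at h ⊢
      rw [h]
      push_cast
      nlinarith [BellB_pos 1 0]
    | m + 2 =>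
      have hrec : BellB 2 (m + 2)
          = ∑ i ∈ range (m + 2), ((m+1).choose i : ℝ) * BellB 1 (i + 1) * BellB 2 (m + 1 - i) :=
        BellB_succ 1 (m + 1)
      have hterm : ∀ i ∈ range (m + 2),
          0 ≤ ((m + 1).choose i : ℝ) * BellB 1 (i + 1) * BellB 2 (m + 1 - i) := by
        intro i _
        have h1 := BellB_pos 1 (m + 1 - i)
        have h2 := BellB_pos 0 (i + 1)
        positivity
      have hpair : (∑ i ∈ ({0, m + 1} : Finset ℕ),
            ((m + 1).choose i : ℝ) * BellB 1 (i + 1) * BellB 2 (m + 1 - i))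
          ≤ BellB 2 (m + 2) := by
        rw [hrec]
        refine Finset.sum_le_sum_of_subset_of_nonneg ?_ (fun i hi _ => hterm i hi)
        intro x hx
        simp only [Finset.mem_insert, Finset.mem_singleton] at hx
        rcases hx with rfl | rfl <;> simp [Finset.mem_range]
      rw [Finset.sum_pair (by omega : (0 : ℕ) ≠ m + 1)] at hpair
      simp only [Nat.choose_zero_right, Nat.choose_self, Nat.cast_one, BellB_one_eq,
        Nat.sub_self, Nat.sub_zero, one_mul, mul_one] at hpair
      have ihm1 := ihm (m + 1) (by omega)
      simp only [BellB_one_eq, mul_one] at ihm1 ⊢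
      push_cast at ihm1 ⊢
      nlinarith [BellB_pos 1 0, hpair]

/-- L and T statements for the pair `(k+1, k+2)`:
L : `(m+1) b_{k+1}(m) ≤ 2 b_{k+2}(m)`, and for `k ≥ 1`, T : `(n+1) b_{k+1}(n) ≤ b_{k+2}(n)`. -/
lemma bellLT : ∀ k : ℕ,
    (∀ m : ℕ, ((m : ℝ) + 1) * BellB (k + 2) 0 * BellB (k + 1) m
        ≤ 2 * BellB (k + 1) 0 * BellB (k + 2) m) ∧
    (1 ≤ k → ∀ n : ℕ, ((n : ℝ) + 1) * BellB (k + 2) 0 * BellB (k + 1) n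
        ≤ BellB (k + 1) 0 * BellB (k + 2) n) := by
  intro k
  induction k with
  | zero => exact ⟨bellL_base, by omega⟩
  | succ k ihk =>
    have hLk := ihk.1
    have hT : ∀ n : ℕ, ((n : ℝ) + 1) * BellB (k + 3) 0 * BellB (k + 2) n
        ≤ BellB (k + 2) 0 * BellB (k + 3) n := by
      intro n
      induction n using Nat.strong_induction_on with
      | _ n ihn =>
        match n with
        | 0 =>
          have : BellB (k + 3) 0 * BellB (k + 2) 0 = BellB (k + 2) 0 * BellB (k + 3) 0 := by ring
          push_cast
          linarith [this.le]
        | n + 1 =>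
          have hrec3 : BellB (k + 3) (n + 1)
              = ∑ i ∈ range (n + 1), (n.choose i : ℝ) * BellB (k + 2) (i + 1) * BellB (k + 3) (n - i) :=
            BellB_succ (k + 2) n
          have hrec2 : BellB (k + 2) (n + 1)
              = ∑ i ∈ range (n + 1), (n.choose i : ℝ) * BellB (k + 1) (i + 1) * BellB (k + 2) (n - i) :=
            BellB_succ (k + 1) n
          rw [hrec3, hrec2, Finset.mul_sum, Finset.mul_sum]
          refine Finset.sum_le_sum fun i hi => ?_
          simp only [Finset.mem_range] at hi
          have hin : i ≤ n := by omega
          have hXpos : 0 < BellB (k + 1) (i + 1) := BellB_pos k (i + 1)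
          have hYpos : 0 < BellB (k + 2) (i + 1) := BellB_pos (k + 1) (i + 1)
          have hZ2pos : 0 < BellB (k + 2) (n - i) := BellB_pos (k + 1) (n - i)
          have hZ3pos : 0 < BellB (k + 3) (n - i) := BellB_pos (k + 2) (n - i)
          have hE2pos : 0 < BellB (k + 2) 0 := BellB_pos (k + 1) 0
          have hE3pos : 0 < BellB (k + 3) 0 := BellB_pos (k + 2) 0
          have hE1pos : 0 < BellB (k + 1) 0 := BellB_pos k 0
          have hL : ((i : ℝ) + 1 + 1) * BellB (k + 2) 0 * BellB (k + 1) (i + 1)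
              ≤ 2 * BellB (k + 1) 0 * BellB (k + 2) (i + 1) := by
            have h := hLk (i + 1)
            push_cast at h
            exact h
          have hE : Real.exp 1 * BellB (k + 1) 0 ≤ BellB (k + 2) 0 := E_succ_ge k
          have h2E : 2 * BellB (k + 1) 0 ≤ BellB (k + 2) 0 := by
            nlinarith [hE1pos, two_le_exp_one]
          have s1 : ((i : ℝ) + 1 + 1) * BellB (k + 1) (i + 1) ≤ BellB (k + 2) (i + 1) := by
            refine le_of_mul_le_mul_left ?_ hE2pos
            calc BellB (k + 2) 0 * (((i : ℝ) + 1 + 1) * BellB (k + 1) (i + 1))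
                = ((i : ℝ) + 1 + 1) * BellB (k + 2) 0 * BellB (k + 1) (i + 1) := by ring
              _ ≤ 2 * BellB (k + 1) 0 * BellB (k + 2) (i + 1) := hL
              _ ≤ BellB (k + 2) 0 * BellB (k + 2) (i + 1) :=
                  mul_le_mul_of_nonneg_right h2E hYpos.le
          have hni : ((n - i : ℕ) : ℝ) = (n : ℝ) - (i : ℝ) := by
            push_cast [Nat.cast_sub hin]
            ring
          have s2 : ((n : ℝ) + 1 + 1) * BellB (k + 1) (i + 1)
              ≤ (((n - i : ℕ) : ℝ) + 1) * BellB (k + 2) (i + 1) := by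
            have e1 : (((n - i : ℕ) : ℝ) + 1) * (((i : ℝ) + 1 + 1) * BellB (k + 1) (i + 1))
                ≤ (((n - i : ℕ) : ℝ) + 1) * BellB (k + 2) (i + 1) :=
              mul_le_mul_of_nonneg_left s1 (by positivity)
            have hcoef : ((n : ℝ) + 1 + 1) ≤ (((n - i : ℕ) : ℝ) + 1) * ((i : ℝ) + 1 + 1) := by
              rw [hni]
              have hni0 : (i : ℝ) ≤ (n : ℝ) := by exact_mod_cast hin
              nlinarith [Nat.cast_nonneg (α := ℝ) i]
            have e2 := mul_le_mul_of_nonneg_right hcoef hXpos.le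
            linarith [e1, e2]
          have f2 := ihn (n - i) (by omega)
          calc (((n + 1 : ℕ) : ℝ) + 1) * BellB (k + 3) 0
                * ((n.choose i : ℝ) * BellB (k + 1) (i + 1) * BellB (k + 2) (n - i))
              = (((n : ℝ) + 1 + 1) * BellB (k + 1) (i + 1))
                * ((n.choose i : ℝ) * (BellB (k + 3) 0 * BellB (k + 2) (n - i))) := by
                push_cast; ring
            _ ≤ ((((n - i : ℕ) : ℝ) + 1) * BellB (k + 2) (i + 1))
                * ((n.choose i : ℝ) * (BellB (k + 3) 0 * BellB (k + 2) (n - i))) :=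
                mul_le_mul_of_nonneg_right s2
                  (mul_nonneg (Nat.cast_nonneg _) (mul_nonneg hE3pos.le hZ2pos.le))
            _ = ((n.choose i : ℝ) * BellB (k + 2) (i + 1))
                * ((((n - i : ℕ) : ℝ) + 1) * BellB (k + 3) 0 * BellB (k + 2) (n - i)) := by ring
            _ ≤ ((n.choose i : ℝ) * BellB (k + 2) (i + 1))
                * (BellB (k + 2) 0 * BellB (k + 3) (n - i)) :=
                mul_le_mul_of_nonneg_left f2 (mul_nonneg (Nat.cast_nonneg _) hYpos.le)
            _ = BellB (k + 2) 0
                * ((n.choose i : ℝ) * BellB (k + 2) (i + 1) * BellB (k + 3) (n - i)) := by ring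
    refine ⟨fun m => ?_, fun _ => hT⟩
    have h := hT m
    nlinarith [mul_pos (BellB_pos (k + 1) 0) (BellB_pos (k + 2) m)]
lemma cast_choose_mul (x y z : ℕ) :
    ((x + y + z).choose x : ℝ) * ((y + z).choose y : ℝ)
      = (x + y + z)! / ((x)! * (y)! * (z)!) := by
  have h1 : ((x + y + z).choose x : ℝ) = ((x + (y + z))! : ℕ) / ((x)! * ((y + z))!) := by
    rw [add_assoc]
    exact_mod_cast Nat.cast_add_choose ℝ
  have h2 : ((y + z).choose y : ℝ) = ((y + z)! : ℕ) / ((y)! * (z)!) := by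
    exact_mod_cast Nat.cast_add_choose ℝ
  rw [h1, h2, ← add_assoc]
  have n1 : ((x)! : ℝ) ≠ 0 := Nat.cast_ne_zero.mpr (Nat.factorial_ne_zero _)
  have n2 : ((y)! : ℝ) ≠ 0 := Nat.cast_ne_zero.mpr (Nat.factorial_ne_zero _)
  have n3 : ((z)! : ℝ) ≠ 0 := Nat.cast_ne_zero.mpr (Nat.factorial_ne_zero _)
  have n4 : (((y + z))! : ℝ) ≠ 0 := Nat.cast_ne_zero.mpr (Nat.factorial_ne_zero _)
  field_simp

lemma binom_id1 (i a r : ℕ) :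
    ((i + a + r + 1 : ℕ) : ℝ) * (((i + a + r).choose i : ℝ) * ((a + r).choose a : ℝ))
      = ((i + a + 1 : ℕ) : ℝ)
        * (((i + a + r + 1).choose (i + a + 1) : ℝ) * ((i + a).choose i : ℝ)) := by
  have h1 := cast_choose_mul i a r
  have h2 : ((i + a + r + 1).choose (i + a + 1) : ℝ)
      = ((i + a + r + 1)! : ℕ) / (((i + a + 1))! * (r)!) := by
    have h := Nat.cast_add_choose (K := ℝ) (a := i + a + 1) (b := r)
    rw [show i + a + 1 + r = i + a + r + 1 from by omega] at h
    exact_mod_cast h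
  have h3 : ((i + a).choose i : ℝ) = ((i + a)! : ℕ) / ((i)! * (a)!) := by
    exact_mod_cast Nat.cast_add_choose ℝ
  rw [h1, h2, h3, Nat.factorial_succ (i + a + r), Nat.factorial_succ (i + a)]
  have n1 : ((i)! : ℝ) ≠ 0 := Nat.cast_ne_zero.mpr (Nat.factorial_ne_zero _)
  have n2 : ((a)! : ℝ) ≠ 0 := Nat.cast_ne_zero.mpr (Nat.factorial_ne_zero _)
  have n3 : ((r)! : ℝ) ≠ 0 := Nat.cast_ne_zero.mpr (Nat.factorial_ne_zero _)
  have n4 : ((i + a)! : ℝ) ≠ 0 := Nat.cast_ne_zero.mpr (Nat.factorial_ne_zero _)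
  have n5 : ((i + a + 1 : ℕ) : ℝ) ≠ 0 := by positivity
  push_cast
  field_simp

lemma binom_id2 (N j c : ℕ) :
    ((N + j + c + 1 : ℕ) : ℝ)
        * (((N + j + c).choose (N + j) : ℝ) * ((N + j).choose N : ℝ))
      = ((j + c + 1 : ℕ) : ℝ)
        * (((N + j + c + 1).choose N : ℝ) * ((j + c).choose j : ℝ)) := by
  have h1 : ((N + j + c).choose (N + j) : ℝ) = ((N + j + c)! : ℕ) / (((N + j))! * (c)!) := by
    have h := Nat.cast_add_choose (K := ℝ) (a := N + j) (b := c)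
    exact_mod_cast h
  have h2 : ((N + j).choose N : ℝ) = ((N + j)! : ℕ) / ((N)! * (j)!) := by
    exact_mod_cast Nat.cast_add_choose ℝ
  have h3 : ((N + j + c + 1).choose N : ℝ) = ((N + j + c + 1)! : ℕ) / ((N)! * ((j + c + 1))!) := by
    have h := Nat.cast_add_choose (K := ℝ) (a := N) (b := j + c + 1)
    rw [show N + (j + c + 1) = N + j + c + 1 from by omega] at h
    exact_mod_cast h
  have h4 : ((j + c).choose j : ℝ) = ((j + c)! : ℕ) / ((j)! * (c)!) := by
    exact_mod_cast Nat.cast_add_choose ℝ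
  rw [h1, h2, h3, h4, Nat.factorial_succ (N + j + c), Nat.factorial_succ (j + c)]
  have n1 : ((N)! : ℝ) ≠ 0 := Nat.cast_ne_zero.mpr (Nat.factorial_ne_zero _)
  have n2 : ((j)! : ℝ) ≠ 0 := Nat.cast_ne_zero.mpr (Nat.factorial_ne_zero _)
  have n3 : ((c)! : ℝ) ≠ 0 := Nat.cast_ne_zero.mpr (Nat.factorial_ne_zero _)
  have n4 : ((N + j)! : ℝ) ≠ 0 := Nat.cast_ne_zero.mpr (Nat.factorial_ne_zero _)
  have n5 : ((j + c)! : ℝ) ≠ 0 := Nat.cast_ne_zero.mpr (Nat.factorial_ne_zero _)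
  have n6 : ((j + c + 1 : ℕ) : ℝ) ≠ 0 := by positivity
  push_cast
  field_simp
set_option maxHeartbeats 1000000 in
lemma bellLB (q : ℕ) : ∀ m n : ℕ,
    BellB (q + 2) n * BellB (q + 2) m ≤ BellB (q + 2) 0 * BellB (q + 2) (n + m) := by
  intro m
  induction m using Nat.strong_induction_on with
  | _ m ihm =>
    match m with
    | 0 =>
      intro n
      simp only [Nat.add_zero]
      rw [mul_comm]
    | s + 1 =>
      intro n
      have hrec : BellB (q + 2) (s + 1)
          = ∑ i ∈ range (s + 1), (s.choose i : ℝ) * BellB (q + 1) (i + 1) * BellB (q + 2) (s - i) :=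
        BellB_succ (q + 1) s
      have hrec2 : BellB (q + 2) (n + s + 1)
          = ∑ i ∈ range (n + s + 1),
              ((n + s).choose i : ℝ) * BellB (q + 1) (i + 1) * BellB (q + 2) (n + s - i) :=
        BellB_succ (q + 1) (n + s)
      have hstep : BellB (q + 2) n * BellB (q + 2) (s + 1)
          ≤ ∑ i ∈ range (s + 1),
              ((n + s).choose i : ℝ) * BellB (q + 1) (i + 1)
                * (BellB (q + 2) 0 * BellB (q + 2) (n + s - i)) := by
        rw [hrec, Finset.mul_sum]
        refine Finset.sum_le_sum fun i hi => ?_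
        simp only [Finset.mem_range] at hi
        have his : i ≤ s := by omega
        have hIH : BellB (q + 2) n * BellB (q + 2) (s - i)
            ≤ BellB (q + 2) 0 * BellB (q + 2) (n + (s - i)) := ihm (s - i) (by omega) n
        have hch : (s.choose i : ℝ) ≤ ((n + s).choose i : ℝ) := by
          exact_mod_cast Nat.choose_le_choose i (by omega : s ≤ n + s)
        have hnssub : n + (s - i) = n + s - i := by omega
        rw [hnssub] at hIH
        have h1 := BellB_pos q (i + 1)
        have h2 := BellB_pos (q + 1) 0
        have h3 := BellB_pos (q + 1) (n + s - i)
        calc BellB (q + 2) n * ((s.choose i : ℝ) * BellB (q + 1) (i + 1) * BellB (q + 2) (s - i))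
            = (s.choose i : ℝ) * (BellB (q + 1) (i + 1)
                * (BellB (q + 2) n * BellB (q + 2) (s - i))) := by ring
          _ ≤ (s.choose i : ℝ) * (BellB (q + 1) (i + 1)
                * (BellB (q + 2) 0 * BellB (q + 2) (n + s - i))) := by
              refine mul_le_mul_of_nonneg_left ?_ (Nat.cast_nonneg _)
              exact mul_le_mul_of_nonneg_left hIH h1.le
          _ ≤ ((n + s).choose i : ℝ) * (BellB (q + 1) (i + 1)
                * (BellB (q + 2) 0 * BellB (q + 2) (n + s - i))) := by
              refine mul_le_mul_of_nonneg_right hch ?_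
              exact mul_nonneg h1.le (mul_nonneg h2.le h3.le)
          _ = ((n + s).choose i : ℝ) * BellB (q + 1) (i + 1)
                * (BellB (q + 2) 0 * BellB (q + 2) (n + s - i)) := by ring
      have hfull : ∑ i ∈ range (s + 1),
            ((n + s).choose i : ℝ) * BellB (q + 1) (i + 1)
              * (BellB (q + 2) 0 * BellB (q + 2) (n + s - i))
          ≤ BellB (q + 2) 0 * BellB (q + 2) (n + s + 1) := by
        rw [hrec2, Finset.mul_sum]
        have hsubset : range (s + 1) ⊆ range (n + s + 1) := by
          intro x hx
          simp only [Finset.mem_range] at hx ⊢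
          omega
        have heq : ∀ i ∈ range (s + 1),
            ((n + s).choose i : ℝ) * BellB (q + 1) (i + 1)
              * (BellB (q + 2) 0 * BellB (q + 2) (n + s - i))
            = BellB (q + 2) 0
              * (((n + s).choose i : ℝ) * BellB (q + 1) (i + 1) * BellB (q + 2) (n + s - i)) := by
          intro i _; ring
        rw [Finset.sum_congr rfl heq]
        refine Finset.sum_le_sum_of_subset_of_nonneg hsubset fun i _ _ => ?_
        have h1 := BellB_pos q (i + 1)
        have h2 := BellB_pos (q + 1) 0
        have h3 := BellB_pos (q + 1) (n + s - i)
        exact mul_nonneg h2.le (mul_nonneg (mul_nonneg (Nat.cast_nonneg _) h1.le) h3.le)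
      have hns : n + (s + 1) = n + s + 1 := by omega
      rw [hns]
      exact hstep.trans hfull
set_option maxHeartbeats 1600000 in
lemma bellUB_of_star (q : ℕ)
    (star : ∀ p j : ℕ, BellB (q + 2) 0 * BellB (q + 1) (p + 1 + j + 1)
      ≤ ((p + 1 + j).choose (p + 1) : ℝ) * BellB (q + 1) (j + 1) * BellB (q + 2) (p + 1)) :
    ∀ n m : ℕ, BellB (q + 2) 0 * BellB (q + 2) (n + m)
      ≤ ((n + m).choose n : ℝ) * BellB (q + 2) n * BellB (q + 2) m := by
  suffices H : ∀ N : ℕ, ∀ n m : ℕ, n + m = N →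
      BellB (q + 2) 0 * BellB (q + 2) (n + m)
        ≤ ((n + m).choose n : ℝ) * BellB (q + 2) n * BellB (q + 2) m by
    intro n m; exact H (n + m) n m rfl
  intro N
  induction N using Nat.strong_induction_on with
  | _ N ihN =>
    intro n m hnm
    match n, m with
    | 0, m =>
      simp only [Nat.zero_add, Nat.choose_zero_right, Nat.cast_one, one_mul]
      rw [mul_comm]
    | n + 1, 0 =>
      simp only [Nat.add_zero, Nat.choose_self, Nat.cast_one, one_mul]
      rw [mul_comm]
    | p + 1, s + 1 =>
      have hps : p + 1 + (s + 1) = p + s + 2 := by omega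
      rw [hps]
      refine le_of_mul_le_mul_left ?_ (show (0:ℝ) < ((p + s + 2 : ℕ) : ℝ) by positivity)
      have hrec : BellB (q + 2) (p + s + 2)
          = ∑ i ∈ range (p + s + 2),
              ((p + s + 1).choose i : ℝ) * BellB (q + 1) (i + 1) * BellB (q + 2) (p + s + 1 - i) :=
        BellB_succ (q + 1) (p + s + 1)
      set F : ℕ → ℝ := fun i => ((p + s + 2 : ℕ) : ℝ) *
          (BellB (q + 2) 0 *
            (((p + s + 1).choose i : ℝ) * BellB (q + 1) (i + 1) * BellB (q + 2) (p + s + 1 - i)))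
        with hF
      have hsplit : ∑ i ∈ range (p + s + 2), F i
          = (∑ i ∈ range (p + 1), F i) + ∑ j ∈ range (s + 1), F (p + 1 + j) := by
        have h := Finset.sum_range_add F (p + 1) (s + 1)
        rw [show p + 1 + (s + 1) = p + s + 2 from by omega] at h
        exact h
      have hstart : ((p + s + 2 : ℕ) : ℝ) * (BellB (q + 2) 0 * BellB (q + 2) (p + s + 2))
          = ∑ i ∈ range (p + s + 2), F i := by
        rw [hrec, Finset.mul_sum, Finset.mul_sum]
      -- part 1
      have hpart1 : ∑ i ∈ range (p + 1), F i
          ≤ ((p + 1 : ℕ) : ℝ) * (((p + s + 2).choose (p + 1) : ℝ) * BellB (q + 2) (s + 1))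
            * BellB (q + 2) (p + 1) := by
        have hrecp : BellB (q + 2) (p + 1)
            = ∑ i ∈ range (p + 1),
                (p.choose i : ℝ) * BellB (q + 1) (i + 1) * BellB (q + 2) (p - i) :=
          BellB_succ (q + 1) p
        rw [hrecp, Finset.mul_sum]
        refine Finset.sum_le_sum fun i hi => ?_
        simp only [Finset.mem_range] at hi
        have hip : i ≤ p := by omega
        have hsub : p + s + 1 - i = (p - i) + (s + 1) := by omega
        have hIH := ihN ((p - i) + (s + 1)) (by omega) (p - i) (s + 1) rfl
        have hco := binom_id1 i (p - i) (s + 1)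
        rw [show i + (p - i) = p from by omega] at hco
        rw [show p + (s + 1) + 1 = p + s + 2 from by omega] at hco
        rw [show p + (s + 1) = p + s + 1 from by omega] at hco
        have hκ := BellB_pos q (i + 1)
        have hB0 := BellB_pos (q + 1) 0
        have hBpi := BellB_pos (q + 1) (p - i)
        have hBs1 := BellB_pos (q + 1) (s + 1)
        simp only [hF, hsub]
        calc ((p + s + 2 : ℕ) : ℝ) *
              (BellB (q + 2) 0 *
                (((p + s + 1).choose i : ℝ) * BellB (q + 1) (i + 1)
                  * BellB (q + 2) ((p - i) + (s + 1))))
            = (((p + s + 2 : ℕ) : ℝ) * ((p + s + 1).choose i : ℝ) * BellB (q + 1) (i + 1))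
              * (BellB (q + 2) 0 * BellB (q + 2) ((p - i) + (s + 1))) := by ring
          _ ≤ (((p + s + 2 : ℕ) : ℝ) * ((p + s + 1).choose i : ℝ) * BellB (q + 1) (i + 1))
              * ((((p - i) + (s + 1)).choose (p - i) : ℝ) * BellB (q + 2) (p - i)
                * BellB (q + 2) (s + 1)) := by
              refine mul_le_mul_of_nonneg_left hIH ?_
              have : (0:ℝ) ≤ ((p + s + 2 : ℕ) : ℝ) := by positivity
              exact mul_nonneg (mul_nonneg this (Nat.cast_nonneg _)) hκ.le
          _ = (((p + s + 2 : ℕ) : ℝ)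
                * (((p + s + 1).choose i : ℝ) * (((p - i) + (s + 1)).choose (p - i) : ℝ)))
              * (BellB (q + 1) (i + 1) * BellB (q + 2) (p - i) * BellB (q + 2) (s + 1)) := by
              ring
          _ = (((p + 1 : ℕ) : ℝ)
                * (((p + s + 2).choose (p + 1) : ℝ) * (p.choose i : ℝ)))
              * (BellB (q + 1) (i + 1) * BellB (q + 2) (p - i) * BellB (q + 2) (s + 1)) := by
              rw [hco]
          _ = ((p + 1 : ℕ) : ℝ) * (((p + s + 2).choose (p + 1) : ℝ) * BellB (q + 2) (s + 1))
              * ((p.choose i : ℝ) * BellB (q + 1) (i + 1) * BellB (q + 2) (p - i)) := by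
              ring
      -- part 2
      have hpart2 : ∑ j ∈ range (s + 1), F (p + 1 + j)
          ≤ ((s + 1 : ℕ) : ℝ) * (((p + s + 2).choose (p + 1) : ℝ) * BellB (q + 2) (p + 1))
            * BellB (q + 2) (s + 1) := by
        have hrecs : BellB (q + 2) (s + 1)
            = ∑ j ∈ range (s + 1),
                (s.choose j : ℝ) * BellB (q + 1) (j + 1) * BellB (q + 2) (s - j) :=
          BellB_succ (q + 1) s
        rw [hrecs, Finset.mul_sum]
        refine Finset.sum_le_sum fun j hj => ?_
        simp only [Finset.mem_range] at hj
        have hjs : j ≤ s := by omega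
        have hsub : p + s + 1 - (p + 1 + j) = s - j := by omega
        have hstar := star p j
        have hco := binom_id2 (p + 1) j (s - j)
        rw [show p + 1 + j + (s - j) + 1 = p + s + 2 from by omega] at hco
        rw [show p + 1 + j + (s - j) = p + s + 1 from by omega] at hco
        rw [show j + (s - j) + 1 = s + 1 from by omega] at hco
        rw [show j + (s - j) = s from by omega] at hco
        have hκ := BellB_pos q (j + 1)
        have hBsj := BellB_pos (q + 1) (s - j)
        have hBp1 := BellB_pos (q + 1) (p + 1)
        simp only [hF, hsub]
        calc ((p + s + 2 : ℕ) : ℝ) *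
              (BellB (q + 2) 0 *
                (((p + s + 1).choose (p + 1 + j) : ℝ) * BellB (q + 1) (p + 1 + j + 1)
                  * BellB (q + 2) (s - j)))
            = (((p + s + 2 : ℕ) : ℝ) * ((p + s + 1).choose (p + 1 + j) : ℝ)
                * BellB (q + 2) (s - j))
              * (BellB (q + 2) 0 * BellB (q + 1) (p + 1 + j + 1)) := by ring
          _ ≤ (((p + s + 2 : ℕ) : ℝ) * ((p + s + 1).choose (p + 1 + j) : ℝ)
                * BellB (q + 2) (s - j))
              * (((p + 1 + j).choose (p + 1) : ℝ) * BellB (q + 1) (j + 1)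
                * BellB (q + 2) (p + 1)) := by
              refine mul_le_mul_of_nonneg_left hstar ?_
              have h0 : (0:ℝ) ≤ ((p + s + 2 : ℕ) : ℝ) := by positivity
              exact mul_nonneg (mul_nonneg h0 (Nat.cast_nonneg _)) hBsj.le
          _ = (((p + s + 2 : ℕ) : ℝ)
                * (((p + s + 1).choose (p + 1 + j) : ℝ) * ((p + 1 + j).choose (p + 1) : ℝ)))
              * (BellB (q + 2) (s - j) * BellB (q + 1) (j + 1) * BellB (q + 2) (p + 1)) := by
              ring
          _ = (((s + 1 : ℕ) : ℝ)
                * (((p + s + 2).choose (p + 1) : ℝ) * ((s.choose j : ℕ) : ℝ)))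
              * (BellB (q + 2) (s - j) * BellB (q + 1) (j + 1) * BellB (q + 2) (p + 1)) := by
              rw [hco]
          _ = ((s + 1 : ℕ) : ℝ) * (((p + s + 2).choose (p + 1) : ℝ) * BellB (q + 2) (p + 1))
              * ((s.choose j : ℝ) * BellB (q + 1) (j + 1) * BellB (q + 2) (s - j)) := by
              ring
      calc ((p + s + 2 : ℕ) : ℝ) * (BellB (q + 2) 0 * BellB (q + 2) (p + s + 2))
          = (∑ i ∈ range (p + 1), F i) + ∑ j ∈ range (s + 1), F (p + 1 + j) := by
            rw [hstart, hsplit]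
        _ ≤ ((p + 1 : ℕ) : ℝ) * (((p + s + 2).choose (p + 1) : ℝ) * BellB (q + 2) (s + 1))
              * BellB (q + 2) (p + 1)
            + ((s + 1 : ℕ) : ℝ) * (((p + s + 2).choose (p + 1) : ℝ) * BellB (q + 2) (p + 1))
              * BellB (q + 2) (s + 1) := add_le_add hpart1 hpart2
        _ = ((p + s + 2 : ℕ) : ℝ)
            * (((p + s + 2).choose (p + 1) : ℝ) * BellB (q + 2) (p + 1) * BellB (q + 2) (s + 1)) := by
            push_cast
            ring
lemma choose_succ_le (p j : ℕ) :
    (p + 1 + j + 1).choose (p + 1) ≤ (p + 2) * ((p + 1 + j).choose (p + 1)) := by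
  have h1 : (p + 1 + j + 1).choose (p + 1) = (p + 1 + j + 1).choose (j + 1) := by
    have h := Nat.choose_symm (show j + 1 ≤ p + 1 + j + 1 by omega)
    rw [show p + 1 + j + 1 - (j + 1) = p + 1 from by omega] at h
    exact h
  have h2 : (p + 1 + j).choose j = (p + 1 + j).choose (p + 1) := by
    have h := Nat.choose_symm (show j ≤ p + 1 + j by omega)
    rw [show p + 1 + j - j = p + 1 from by omega] at h
    exact h.symm
  have h3 := Nat.add_one_mul_choose_eq (p + 1 + j) j
  have hnat : (j + 1) * ((p + 1 + j + 1).choose (p + 1))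
      = (p + 1 + j + 1) * ((p + 1 + j).choose (p + 1)) := by
    rw [h1, ← h2]
    linarith [h3]
  have hmul : (j + 1) * ((p + 1 + j + 1).choose (p + 1))
      ≤ (j + 1) * ((p + 2) * ((p + 1 + j).choose (p + 1))) := by
    rw [hnat]
    have hc : p + 1 + j + 1 ≤ (j + 1) * (p + 2) := by nlinarith
    calc (p + 1 + j + 1) * ((p + 1 + j).choose (p + 1))
        ≤ ((j + 1) * (p + 2)) * ((p + 1 + j).choose (p + 1)) :=
          Nat.mul_le_mul_right _ hc
      _ = (j + 1) * ((p + 2) * ((p + 1 + j).choose (p + 1))) := by ring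
  exact Nat.le_of_mul_le_mul_left hmul (by omega)

set_option maxHeartbeats 1000000 in
lemma bellUB (q : ℕ) : ∀ n m : ℕ,
    BellB (q + 2) 0 * BellB (q + 2) (n + m)
      ≤ ((n + m).choose n : ℝ) * BellB (q + 2) n * BellB (q + 2) m := by
  induction q with
  | zero =>
    apply bellUB_of_star 0
    intro p j
    show BellB 2 0 * BellB 1 (p + 1 + j + 1)
        ≤ ((p + 1 + j).choose (p + 1) : ℝ) * BellB 1 (j + 1) * BellB 2 (p + 1)
    rw [BellB_one_eq, BellB_one_eq]
    have hL := bellL_base (p + 1)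
    simp only [BellB_one_eq, mul_one] at hL
    have hC : (1 : ℝ) ≤ ((p + 1 + j).choose (p + 1) : ℝ) := by
      exact_mod_cast Nat.succ_le_of_lt (Nat.choose_pos (by omega : p + 1 ≤ p + 1 + j))
    have hpos1 := BellB_pos 1 (p + 1)
    have hpos0 := BellB_pos 1 0
    push_cast at hL
    nlinarith [hL, hC, hpos0, hpos1, mul_le_mul_of_nonneg_right hC hpos1.le,
      mul_nonneg (Nat.cast_nonneg (α := ℝ) p) hpos0.le]
  | succ q ihq =>
    apply bellUB_of_star (q + 1)
    intro p j
    show BellB (q + 3) 0 * BellB (q + 2) (p + 1 + j + 1)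
        ≤ ((p + 1 + j).choose (p + 1) : ℝ) * BellB (q + 2) (j + 1) * BellB (q + 3) (p + 1)
    have hT : ∀ n : ℕ, ((n : ℝ) + 1) * BellB (q + 3) 0 * BellB (q + 2) n
        ≤ BellB (q + 2) 0 * BellB (q + 3) n := (bellLT (q + 1)).2 (by omega)
    have hIH := ihq (p + 1) (j + 1)
    rw [show p + 1 + (j + 1) = p + 1 + j + 1 from by omega] at hIH
    have hT' : ((p + 2 : ℕ) : ℝ) * BellB (q + 3) 0 * BellB (q + 2) (p + 1)
        ≤ BellB (q + 2) 0 * BellB (q + 3) (p + 1) := by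
      have h := hT (p + 1)
      push_cast at h ⊢
      linarith
    have hCle : ((p + 1 + j + 1).choose (p + 1) : ℝ)
        ≤ ((p + 2 : ℕ) : ℝ) * ((p + 1 + j).choose (p + 1) : ℝ) := by
      exact_mod_cast choose_succ_le p j
    have hEpos : 0 < BellB (q + 2) 0 := BellB_pos (q + 1) 0
    have hE'pos : 0 < BellB (q + 3) 0 := BellB_pos (q + 2) 0
    have hB2 := BellB_pos (q + 1) (j + 1)
    have hB5 : 0 < BellB (q + 3) (p + 1) := BellB_pos (q + 2) (p + 1)
    refine le_of_mul_le_mul_left ?_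
      (show (0 : ℝ) < ((p + 2 : ℕ) : ℝ) * BellB (q + 2) 0 from
        mul_pos (by exact_mod_cast Nat.succ_pos (p + 1)) hEpos)
    calc ((p + 2 : ℕ) : ℝ) * BellB (q + 2) 0
            * (BellB (q + 3) 0 * BellB (q + 2) (p + 1 + j + 1))
        = (((p + 2 : ℕ) : ℝ) * BellB (q + 3) 0)
            * (BellB (q + 2) 0 * BellB (q + 2) (p + 1 + j + 1)) := by ring
      _ ≤ (((p + 2 : ℕ) : ℝ) * BellB (q + 3) 0)
            * (((p + 1 + j + 1).choose (p + 1) : ℝ) * BellB (q + 2) (p + 1)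
              * BellB (q + 2) (j + 1)) :=
          mul_le_mul_of_nonneg_left hIH (mul_nonneg (Nat.cast_nonneg _) hE'pos.le)
      _ = (((p + 1 + j + 1).choose (p + 1) : ℝ) * BellB (q + 2) (j + 1))
            * (((p + 2 : ℕ) : ℝ) * BellB (q + 3) 0 * BellB (q + 2) (p + 1)) := by ring
      _ ≤ (((p + 1 + j + 1).choose (p + 1) : ℝ) * BellB (q + 2) (j + 1))
            * (BellB (q + 2) 0 * BellB (q + 3) (p + 1)) :=
          mul_le_mul_of_nonneg_left hT' (mul_nonneg (Nat.cast_nonneg _) hB2.le)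
      _ = ((p + 1 + j + 1).choose (p + 1) : ℝ)
            * (BellB (q + 2) (j + 1) * BellB (q + 2) 0 * BellB (q + 3) (p + 1)) := by ring
      _ ≤ (((p + 2 : ℕ) : ℝ) * ((p + 1 + j).choose (p + 1) : ℝ))
            * (BellB (q + 2) (j + 1) * BellB (q + 2) 0 * BellB (q + 3) (p + 1)) :=
          mul_le_mul_of_nonneg_right hCle
            (mul_nonneg (mul_nonneg hB2.le hEpos.le) hB5.le)
      _ = ((p + 2 : ℕ) : ℝ) * BellB (q + 2) 0
            * (((p + 1 + j).choose (p + 1) : ℝ) * BellB (q + 2) (j + 1)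
              * BellB (q + 3) (p + 1)) := by ring


/-- For every integer `k ≥ 2` and all `n, m ≥ 0`,
`bellOrd k n * bellOrd k m ≤ bellOrd k (n + m) ≤ (n+m).choose n * bellOrd k n * bellOrd k m`. -/
theorem bellOrd_product_bounds (k : ℕ) (hk : 2 ≤ k) (n m : ℕ) :
    bellOrd k n * bellOrd k m ≤ bellOrd k (n + m) ∧
      bellOrd k (n + m) ≤ ((n + m).choose n : ℝ) * bellOrd k n * bellOrd k m := by
  obtain ⟨q, rfl⟩ : ∃ q, k = q + 2 := ⟨k - 2, by omega⟩
  have hE : 0 < expIter (q + 2) 0 := expIter_succ_pos (q + 1) 0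
  have hE' : BellB (q + 2) 0 = expIter (q + 2) 0 := BellB_zero' (q + 2)
  have hB0 : 0 < BellB (q + 2) 0 := BellB_pos (q + 1) 0
  have hLB := bellLB q m n
  have hUB := bellUB q n m
  unfold bellOrd
  constructor
  · rw [div_mul_div_comm, div_le_div_iff₀ (by positivity) hE, ← hE']
    nlinarith [mul_le_mul_of_nonneg_right hLB hB0.le]
  · rw [show ((n + m).choose n : ℝ) * (BellB (q + 2) n / expIter (q + 2) 0)
          * (BellB (q + 2) m / expIter (q + 2) 0)
        = (((n + m).choose n : ℝ) * BellB (q + 2) n * BellB (q + 2) m)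
          / (expIter (q + 2) 0 * expIter (q + 2) 0) from by ring]
    rw [div_le_div_iff₀ hE (by positivity), ← hE']
    nlinarith [mul_le_mul_of_nonneg_right hUB hB0.le]
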